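/- Let U : ℕ → Multiset ℝ be a sequence of nonempty multisets of real numbers (the positions of the correct robots over time) such that: (cautiousness) the ranges are nested, i.e. for all t, [min U(t+1), max U(t+1)] ⊆ [min U(t), max U(t)]; and (shrinking) there exists α with 0 < α < 1 such that for all t there exists t′ > t with diam(U(t′)) ≤ α · diam(U(t)). Then the correct robots converge: diam(U(t)) tends to 0 as t → ∞, and there exists a point p ∈ ℝ such that for every ε > 0 there is a time T with [min U(t), max U(t)] ⊆ [p − ε, p + ε] for all t ≥ T. -/

import Mathlib

/-- The k-th smallest element (1-indexed, counted with multiplicity) of a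
multiset of real numbers. -/
noncomputable def nth (S : Multiset ℝ) (k : ℕ) : ℝ :=
  (S.sort (· ≤ ·)).getD (k - 1) 0

/-- The smallest element of a (nonempty) multiset of reals. -/
noncomputable def mmin (S : Multiset ℝ) : ℝ := nth S 1

/-- The largest element of a (nonempty) multiset of reals. -/
noncomputable def mmax (S : Multiset ℝ) : ℝ := nth S S.card

/-- The diameter of a (nonempty) multiset of reals. -/
noncomputable def mdiam (S : Multiset ℝ) : ℝ := mmax S - mmin S

lemma mmin_le_mmax' {S : Multiset ℝ} (h : S ≠ 0) : mmin S ≤ mmax S := by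
  have hl : (S.sort (· ≤ ·)).Pairwise (· ≤ ·) := S.pairwise_sort _
  have hlen : (S.sort (· ≤ ·)).length = S.card := S.length_sort _
  have hc : 0 < S.card := Multiset.card_pos.mpr h
  unfold mmin mmax nth
  rw [List.getD_eq_getElem _ _ (by omega), List.getD_eq_getElem _ _ (by omega)]
  exact hl.rel_get_of_le (by simp only [Fin.mk_le_mk]; omega)

theorem stmt12 (U : ℕ → Multiset ℝ) (hne : ∀ t, U t ≠ 0)
    (hcaut : ∀ t, Set.Icc (mmin (U (t + 1))) (mmax (U (t + 1))) ⊆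
      Set.Icc (mmin (U t)) (mmax (U t)))
    (hshrink : ∃ α : ℝ, 0 < α ∧ α < 1 ∧
      ∀ t, ∃ t', t' > t ∧ mdiam (U t') ≤ α * mdiam (U t)) :
    Filter.Tendsto (fun t => mdiam (U t)) Filter.atTop (nhds 0) ∧
    ∃ p : ℝ, ∀ ε : ℝ, ε > 0 → ∃ T, ∀ t ≥ T,
      Set.Icc (mmin (U t)) (mmax (U t)) ⊆ Set.Icc (p - ε) (p + ε) := by
  obtain ⟨α, hα0, hα1, hsh⟩ := hshrink
  set a : ℕ → ℝ := fun t => mmin (U t) with ha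
  set b : ℕ → ℝ := fun t => mmax (U t) with hb
  have hab : ∀ t, a t ≤ b t := fun t => mmin_le_mmax' (hne t)
  have hstep : ∀ t, a t ≤ a (t + 1) ∧ b (t + 1) ≤ b t := by
    intro t
    have h1 := hcaut t ⟨le_refl _, hab (t + 1)⟩
    have h2 := hcaut t ⟨hab (t + 1), le_refl _⟩
    exact ⟨h1.1, h2.2⟩
  have hamono : Monotone a := monotone_nat_of_le_succ fun t => (hstep t).1
  have hbanti : Antitone b := antitone_nat_of_succ_le fun t => (hstep t).2
  set d : ℕ → ℝ := fun t => mdiam (U t) with hd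
  have hdba : ∀ t, d t = b t - a t := fun t => rfl
  have hdanti : Antitone d := by
    intro s t hst
    simp only [hdba]
    have := hamono hst
    have := hbanti hst
    linarith
  have hd0 : ∀ t, 0 ≤ d t := fun t => by
    have := hab t; simp only [hdba]; linarith
  -- a s ≤ b t for all s, t
  have hab' : ∀ s t, a s ≤ b t := by
    intro s t
    rcases le_total s t with h | h
    · exact le_trans (hamono h) (hab t)
    · exact le_trans (hab s) (hbanti h)
  -- d tends to its infimum L
  have hbdd : BddBelow (Set.range d) := ⟨0, by rintro x ⟨t, rfl⟩; exact hd0 t⟩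
  set L : ℝ := ⨅ t, d t with hL
  have htend : Filter.Tendsto d Filter.atTop (nhds L) :=
    tendsto_atTop_ciInf hdanti hbdd
  have hL0 : 0 ≤ L := le_ciInf hd0
  have hLle : ∀ t, L ≤ α * d t := by
    intro t
    obtain ⟨t', _, ht'⟩ := hsh t
    exact le_trans (ciInf_le hbdd t') ht'
  have hLα : L ≤ α * L := by
    have hLd : ∀ t, L / α ≤ d t := by
      intro t
      rw [div_le_iff₀ hα0, mul_comm]
      exact hLle t
    have h2 : L / α ≤ L := le_ciInf hLd
    rw [div_le_iff₀ hα0] at h2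
    nlinarith
  have hLzero : L = 0 := by nlinarith
  rw [hLzero] at htend
  refine ⟨htend, ?_⟩
  -- p = sup of a
  have hba : BddAbove (Set.range a) := ⟨b 0, by rintro x ⟨s, rfl⟩; exact hab' s 0⟩
  set p : ℝ := ⨆ t, a t with hp
  have hap : ∀ t, a t ≤ p := fun t => le_ciSup hba t
  have hpb : ∀ t, p ≤ b t := fun t => ciSup_le fun s => hab' s t
  refine ⟨p, fun ε hε => ?_⟩
  have hev : ∀ᶠ t in Filter.atTop, d t < ε :=
    htend.eventually_lt_const hε
  obtain ⟨T, hT⟩ := hev.exists_forall_of_atTop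
  refine ⟨T, fun t hts => ?_⟩
  have hdt : d t < ε := hT t hts
  intro x hx
  have h1 : p - ε ≤ a t := by
    have := hpb t; have := hdba t; simp only [hdba] at hdt; linarith
  have h2 : b t ≤ p + ε := by
    have := hap t; simp only [hdba] at hdt; linarith
  exact ⟨le_trans h1 hx.1, le_trans hx.2 h2⟩
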